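/- Let A be an n×n Hermitian matrix with simple eigenvalue λ and unit eigenvector v. Then p_A'(λ) ≠ 0, and |v_1|^2 = p_{M_1}(λ)/p_A'(λ), where M_1 = A(2:n,2:n). -/

import Mathlib

open Polynomial Matrix Finset

namespace Stmt18Aux

lemma eval_charpoly' {m : Type*} [Fintype m] [DecidableEq m]
    (M : Matrix m m ℂ) (r : ℂ) :
    M.charpoly.eval r = ((r • (1 : Matrix m m ℂ)) - M).det := by
  rw [Matrix.charpoly, ← Polynomial.coe_evalRingHom, RingHom.map_det]
  congr 1
  ext i j
  by_cases h : i = j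
  · subst h
    simp [charmatrix_apply_eq, Matrix.one_apply]
  · simp [charmatrix_apply_ne _ _ _ h, Matrix.one_apply_ne h]

lemma charpoly_unitary_conj {m : Type*} [Fintype m] [DecidableEq m]
    (U D : Matrix m m ℂ) (h1 : U * star U = 1) :
    (U * D * star U).charpoly = D.charpoly := by
  have hmap1 : (U.map (C : ℂ →+* ℂ[X])) * ((star U).map C) = 1 := by
    rw [← Matrix.map_mul, h1]
    exact Matrix.map_one _ (map_zero C) (map_one C)
  have hmat : charmatrix (U * D * star U)
      = (U.map (C : ℂ →+* ℂ[X])) * charmatrix D * ((star U).map C) := by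
    unfold charmatrix
    simp only [RingHom.mapMatrix_apply]
    rw [Matrix.mul_sub, Matrix.sub_mul]
    congr 1
    · rw [(Matrix.scalar_commute (X : ℂ[X]) (Commute.all X) (U.map C)).symm.eq,
        mul_assoc, hmap1, mul_one]
    · rw [Matrix.map_mul, Matrix.map_mul]
  rw [Matrix.charpoly, hmat, det_mul, det_mul, Matrix.charpoly]
  have : (U.map (C : ℂ →+* ℂ[X])).det * ((star U).map (C : ℂ →+* ℂ[X])).det = 1 := by
    rw [← det_mul, hmap1, det_one]
  calc (U.map (C : ℂ →+* ℂ[X])).det * (charmatrix D).det * ((star U).map C).det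
      = ((U.map (C : ℂ →+* ℂ[X])).det * ((star U).map C).det) * (charmatrix D).det := by ring
    _ = (charmatrix D).det := by rw [this, one_mul]

lemma charpoly_diagonal' {m : Type*} [Fintype m] [DecidableEq m] (d : m → ℂ) :
    (diagonal d).charpoly = ∏ i, (X - C (d i)) := by
  rw [Matrix.charpoly]
  have : charmatrix (diagonal d) = diagonal (fun i => (X : ℂ[X]) - C (d i)) := by
    ext i j
    by_cases h : i = j
    · subst h; simp [charmatrix_apply_eq]
    · simp [charmatrix_apply_ne _ _ _ h, diagonal_apply_ne _ h]
  rw [this, det_diagonal]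

lemma normsq_complex (z : ℂ) : ((‖z‖ : ℂ))^2 = z * star z := by
  rw [show (star z) = (starRingEnd ℂ) z from rfl, Complex.mul_conj,
    Complex.normSq_eq_norm_sq]
  norm_cast

end Stmt18Aux

open Stmt18Aux

theorem stmt18 (n : ℕ) (A : Matrix (Fin (n + 1)) (Fin (n + 1)) ℂ)
    (hA : A.IsHermitian) (μ : ℝ)
    (hsimple : A.charpoly.rootMultiplicity (μ : ℂ) = 1)
    (v : Fin (n + 1) → ℂ)
    (heig : A.mulVec v = (μ : ℂ) • v)
    (hunit : star v ⬝ᵥ v = 1) :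
    (derivative A.charpoly).eval (μ : ℂ) ≠ 0 ∧
    (‖v 0‖ ^ 2 : ℂ) =
      ((A.submatrix Fin.succ Fin.succ).charpoly).eval (μ : ℂ) /
        (derivative A.charpoly).eval (μ : ℂ) := by
  classical
  set U : Matrix (Fin (n+1)) (Fin (n+1)) ℂ :=
    (Matrix.IsHermitian.eigenvectorUnitary hA : Matrix (Fin (n+1)) (Fin (n+1)) ℂ) with hUdef
  have hU1 : U * star U = 1 :=
    (Matrix.mem_unitaryGroup_iff).mp (Matrix.IsHermitian.eigenvectorUnitary hA).2
  have hU2 : star U * U = 1 :=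
    (Matrix.mem_unitaryGroup_iff').mp (Matrix.IsHermitian.eigenvectorUnitary hA).2
  set d : Fin (n+1) → ℂ := fun i => ((hA.eigenvalues i : ℝ) : ℂ) with hddef
  have hspec : A = U * diagonal d * star U := hA.spectral_theorem
  have hcp : A.charpoly = ∏ i, (X - C (d i)) := by
    rw [hspec, charpoly_unitary_conj U _ hU1, charpoly_diagonal']
  have hroots : A.charpoly.roots = Finset.univ.val.map d := by
    rw [hcp, Finset.prod_eq_multiset_prod,
      show (fun i => (X : ℂ[X]) - C (d i)) = (fun a : ℂ => (X : ℂ[X]) - C a) ∘ d from rfl,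
      ← Multiset.map_map]
    exact roots_multiset_prod_X_sub_C _
  have h1 : Multiset.count (μ:ℂ) (Finset.univ.val.map d) = 1 := by
    rw [← hroots, count_roots]; exact hsimple
  have hcard : (Finset.filter (fun i => (μ:ℂ) = d i) Finset.univ).card = 1 := by
    rw [Finset.card_def, Finset.filter_val]
    rwa [Multiset.count_map] at h1
  obtain ⟨i0, hi0⟩ := Finset.card_eq_one.mp hcard
  have hiff : ∀ i, (μ:ℂ) = d i ↔ i = i0 := by
    intro i
    constructor
    · intro h
      have hmem : i ∈ Finset.filter (fun i => (μ:ℂ) = d i) Finset.univ := by simp [h]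
      rw [hi0] at hmem; simpa using hmem
    · rintro rfl
      have hmem : i ∈ Finset.filter (fun i => (μ:ℂ) = d i) Finset.univ := by
        rw [hi0]; simp
      simpa using hmem
  have hd0 : d i0 = (μ:ℂ) := ((hiff i0).mpr rfl).symm
  have hdne : ∀ i, i ≠ i0 → (μ:ℂ) - d i ≠ 0 := by
    intro i h
    exact sub_ne_zero_of_ne (fun he => h ((hiff i).mp he))
  have hcq : A.charpoly = (X - C (μ:ℂ)) * ∏ j ∈ Finset.univ.erase i0, (X - C (d j)) := by
    rw [hcp, ← hd0]
    exact (Finset.mul_prod_erase _ _ (Finset.mem_univ i0)).symm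
  set c : ℂ := ∏ j ∈ Finset.univ.erase i0, ((μ:ℂ) - d j) with hcdef
  have hqev : (∏ j ∈ Finset.univ.erase i0, ((X:ℂ[X]) - C (d j))).eval (μ:ℂ) = c := by
    simp [eval_prod, hcdef]
  have hderiv : (derivative A.charpoly).eval (μ:ℂ) = c := by
    rw [hcq, derivative_mul]
    simp [hqev]
  have hcne : c ≠ 0 :=
    Finset.prod_ne_zero_iff.mpr (fun i hi => hdne i (Finset.ne_of_mem_erase hi))
  refine ⟨by rw [hderiv]; exact hcne, ?_⟩
  -- the eigenvector is a multiple of column i0 of U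
  set y : Fin (n+1) → ℂ := star U *ᵥ v with hy
  have hDy : diagonal d *ᵥ y = (μ:ℂ) • y := by
    calc diagonal d *ᵥ y = (diagonal d * star U) *ᵥ v := by rw [hy, mulVec_mulVec]
      _ = (star U * A) *ᵥ v := by
          rw [hspec, ← mul_assoc, ← mul_assoc, hU2, one_mul]
      _ = star U *ᵥ (A *ᵥ v) := by rw [mulVec_mulVec]
      _ = star U *ᵥ ((μ:ℂ) • v) := by rw [heig]
      _ = (μ:ℂ) • y := by rw [mulVec_smul, hy]
  have hyzero : ∀ i, i ≠ i0 → y i = 0 := by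
    intro i hi
    have h2 := congrFun hDy i
    rw [mulVec_diagonal] at h2
    have h3 : ((μ:ℂ) - d i) * y i = 0 := by
      have : ((μ:ℂ) • y) i = (μ:ℂ) * y i := rfl
      rw [this] at h2
      ring_nf
      ring_nf at h2
      rw [h2]; ring
    rcases mul_eq_zero.mp h3 with h | h
    · exact absurd h (hdne i hi)
    · exact h
  have hvU : v = U *ᵥ y := by rw [hy, mulVec_mulVec, hU1, one_mulVec]
  set t : ℂ := y i0 with htdef
  have hventry : ∀ j, v j = U j i0 * t := by
    intro j
    rw [hvU]
    show ∑ k, U j k * y k = U j i0 * t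
    rw [Finset.sum_eq_single i0]
    · intro k _ hk; rw [hyzero k hk, mul_zero]
    · intro h; exact absurd (Finset.mem_univ i0) h
  have hUU : ∑ j, star (U j i0) * U j i0 = 1 := by
    have h2 := congrFun (congrFun hU2 i0) i0
    rw [Matrix.mul_apply] at h2
    simpa [Matrix.star_apply, Matrix.one_apply] using h2
  have ht : star t * t = 1 := by
    have hvv : star v ⬝ᵥ v = (∑ j, star (U j i0) * U j i0) * (star t * t) := by
      rw [dotProduct, Finset.sum_mul]
      refine Finset.sum_congr rfl fun j _ => ?_
      rw [Pi.star_apply, hventry j, star_mul']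
      ring
    rw [hunit, hUU, one_mul] at hvv
    exact hvv.symm
  -- adjugate computation
  set B : Matrix (Fin (n+1)) (Fin (n+1)) ℂ := (μ:ℂ) • 1 - A with hB
  set E : Matrix (Fin (n+1)) (Fin (n+1)) ℂ := diagonal (fun i => (μ:ℂ) - d i) with hE
  have hBE : B = U * E * star U := by
    have h1 : E = (μ:ℂ) • 1 - diagonal d := by
      rw [hE]
      ext i j
      by_cases h : i = j
      · subst h; simp
      · simp [diagonal_apply_ne _ h, Matrix.one_apply_ne h]
    rw [hB, h1, hspec, Matrix.mul_sub, Matrix.sub_mul]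
    congr 1
    rw [mul_smul_comm, mul_one, smul_mul_assoc, hU1]
  have hadjE : adjugate E = diagonal (fun i => ∏ j ∈ Finset.univ.erase i, ((μ:ℂ) - d j)) :=
    adjugate_diagonal _
  have hadjU : adjugate U = U.det • star U := by
    calc adjugate U = adjugate U * (U * star U) := by rw [hU1, mul_one]
      _ = (adjugate U * U) * star U := by rw [mul_assoc]
      _ = U.det • star U := by rw [adjugate_mul, smul_mul_assoc, one_mul]
  have hadjsU : adjugate (star U) = (star U).det • U := by
    calc adjugate (star U) = adjugate (star U) * (star U * U) := by rw [hU2, mul_one]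
      _ = (adjugate (star U) * star U) * U := by rw [mul_assoc]
      _ = (star U).det • U := by rw [adjugate_mul, smul_mul_assoc, one_mul]
  have hdet1 : (star U).det * U.det = 1 := by rw [← det_mul, hU2, det_one]
  have hTT : adjugate B = U * adjugate E * star U := by
    rw [hBE, adjugate_mul_distrib, adjugate_mul_distrib, hadjU, hadjsU]
    simp only [smul_mul_assoc, mul_smul_comm, smul_smul, mul_assoc]
    rw [mul_comm U.det, hdet1, one_smul]
  have hw : ∀ i, i ≠ i0 → (∏ j ∈ Finset.univ.erase i, ((μ:ℂ) - d j)) = 0 := by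
    intro i hi
    refine Finset.prod_eq_zero (Finset.mem_erase.mpr ⟨fun h => hi h.symm, Finset.mem_univ i0⟩) ?_
    rw [hd0, sub_self]
  have hT00 : adjugate B 0 0 = U 0 i0 * star (U 0 i0) * c := by
    rw [hTT, Matrix.mul_apply, Finset.sum_eq_single i0]
    · rw [hadjE, Matrix.mul_diagonal, Matrix.star_apply]
      rw [hcdef]; ring
    · intro k _ hk
      rw [hadjE, Matrix.mul_diagonal, hw k hk, mul_zero, zero_mul]
    · intro h; exact absurd (Finset.mem_univ i0) h
  have hsub : B.submatrix Fin.succ Fin.succ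
      = (μ:ℂ) • (1 : Matrix (Fin n) (Fin n) ℂ) - A.submatrix Fin.succ Fin.succ := by
    rw [hB]
    ext i j
    by_cases h : i = j
    · subst h; simp
    · simp [Matrix.one_apply_ne h, Matrix.one_apply_ne (fun hc => h (Fin.succ_injective _ hc))]
  have hM1 : ((A.submatrix Fin.succ Fin.succ).charpoly).eval (μ:ℂ) = adjugate B 0 0 := by
    rw [eval_charpoly', ← hsub, adjugate_fin_succ_eq_det_submatrix]
    simp [Fin.succAbove_zero]
  have hv0 : v 0 * star (v 0) = U 0 i0 * star (U 0 i0) := by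
    rw [hventry 0, star_mul']
    calc U 0 i0 * t * (star (U 0 i0) * star t)
        = U 0 i0 * star (U 0 i0) * (star t * t) := by ring
      _ = U 0 i0 * star (U 0 i0) := by rw [ht, mul_one]
  rw [hderiv, eq_div_iff hcne, hM1, hT00, ← hv0, normsq_complex]
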